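/- Let X be a real random variable such that G_X(α, 0) < ∞ for all α in some open interval containing 1. Then the function α ↦ G_X(α, 0) is differentiable at α = 1 and its derivative there equals −𝒞ℰ(X), i.e. 𝒞ℰ(X) = −(∂/∂α) G_X(α, 0)|_{α=1}. -/

import Mathlib

open MeasureTheory ProbabilityTheory Set

/-- The (essential) support interval of a CDF `F`: the set where `0 < F x < 1`,
which coincides (up to endpoints) with the interval `(l, r)` where
`l = inf {x : F x > 0}` and `r = sup {x : 1 - F x > 0}`. -/
def cigfSupport (F : ℝ → ℝ) : Set ℝ := {x | 0 < F x ∧ F x < 1}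

/-- The cumulative information generating function
`G_X(α, β) = ∫_l^r F(x)^α (1 - F(x))^β dx`. -/
noncomputable def cigf (F : ℝ → ℝ) (α β : ℝ) : ℝ :=
  ∫ x in cigfSupport F, F x ^ α * (1 - F x) ^ β

/-- `(α, β) ∈ D_X`, i.e. `G_X(α, β) < ∞`. -/
def memD (F : ℝ → ℝ) (α β : ℝ) : Prop :=
  IntegrableOn (fun x => F x ^ α * (1 - F x) ^ β) (cigfSupport F)

/-- The CDF of a random variable `X` under the probability measure `P`. -/
noncomputable def rvCDF {Ω : Type*} [MeasurableSpace Ω] (P : Measure Ω) (X : Ω → ℝ) (x : ℝ) : ℝ :=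
  (P {ω | X ω ≤ x}).toReal

/-- The CDF of a probability measure on `ℝ`. -/
noncomputable def cdfOf (μ : Measure ℝ) (x : ℝ) : ℝ := (μ (Iic x)).toReal

/-- The cumulative entropy `𝒞ℰ(X) = -∫_l^r F x * log (F x) dx`. -/
noncomputable def CE (F : ℝ → ℝ) : ℝ :=
  -∫ x in cigfSupport F, F x * Real.log (F x)

/-- If `G_X(α, 0) < ∞` for all `α` in an open interval containing `1`, then
`α ↦ G_X(α, 0)` is differentiable at `α = 1` with derivative `-𝒞ℰ(X)`. -/
theorem stmt5 {Ω : Type*} [MeasurableSpace Ω] (P : Measure Ω) [IsProbabilityMeasure P]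
    (X : Ω → ℝ) (hX : Measurable X)
    (a b : ℝ) (ha : a < 1) (hb : 1 < b)
    (hfin : ∀ α ∈ Ioo a b, memD (rvCDF P X) α 0) :
    HasDerivAt (fun α => cigf (rvCDF P X) α 0) (-(CE (rvCDF P X))) 1 := by
  set Φ : ℝ → ℝ := rvCDF P X with hΦdef
  -- Φ is monotone, hence measurable
  have hΦmono : Monotone Φ := by
    intro x y hxy
    exact ENNReal.toReal_mono (measure_ne_top P _)
      (measure_mono fun ω hω => le_trans hω hxy)
  have hΦm : Measurable Φ := hΦmono.measurable
  have hS : MeasurableSet (cigfSupport Φ) :=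
    (measurableSet_lt measurable_const hΦm).inter (measurableSet_lt hΦm measurable_const)
  set S := cigfSupport Φ with hSdef
  set c : ℝ := (a + 1) / 2 with hc
  set δ : ℝ := (1 - c) / 2 with hδ
  have hcmem : c ∈ Set.Ioo a b := by constructor <;> [skip; skip] <;> simp only [hc] <;> linarith
  have hδpos : 0 < δ := by simp only [hδ, hc]; linarith
  have hint_c : IntegrableOn (fun x => Φ x ^ c) S := by
    have := hfin c hcmem
    simpa [memD, Real.rpow_zero] using this
  have hint_1 : IntegrableOn (fun x => Φ x ^ (1 : ℝ)) S := by
    have := hfin 1 ⟨ha, hb⟩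
    simpa [memD, Real.rpow_zero] using this
  -- rewrite the function
  have hfun : (fun α => cigf Φ α 0) = fun α => ∫ x in S, Φ x ^ α := by
    funext α; simp [cigf, Real.rpow_zero]; rfl
  have hval : -(CE Φ) = ∫ x in S, Φ x ^ (1 : ℝ) * Real.log (Φ x) := by
    simp [CE, Real.rpow_one]; rfl
  rw [hfun, hval]
  -- apply the dominated differentiation theorem
  have key := hasDerivAt_integral_of_dominated_loc_of_deriv_le
    (μ := volume.restrict S) (x₀ := (1 : ℝ))
    (F := fun α x => Φ x ^ α)
    (F' := fun α x => Φ x ^ α * Real.log (Φ x))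
    (bound := fun x => δ⁻¹ * Φ x ^ c)
    (Metric.ball_mem_nhds (1 : ℝ) hδpos)
    (Filter.Eventually.of_forall fun α =>
      (Measurable.aestronglyMeasurable (by measurability)))
    hint_1
    (Measurable.aestronglyMeasurable (by measurability))
    ?_ (hint_c.const_mul δ⁻¹) ?_
  · exact key.2
  · -- bound
    refine (ae_restrict_mem hS).mono fun x hx => ?_
    obtain ⟨hx0, hx1⟩ : 0 < Φ x ∧ Φ x < 1 := hx
    intro α hα
    have hα1 : c + δ < α := by
      have : |α - 1| < δ := by simpa [Metric.mem_ball, Real.dist_eq] using hα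
      have := abs_lt.mp this
      simp only [hδ]
      linarith [this.1]
    have hlogle : -Real.log (Φ x) ≤ δ⁻¹ * Φ x ^ (-δ) := by
      have h1 : Real.log (Φ x ^ (-δ)) ≤ Φ x ^ (-δ) :=
        le_trans (Real.log_le_sub_one_of_pos (Real.rpow_pos_of_pos hx0 _)) (by linarith)
      rw [Real.log_rpow hx0] at h1
      have h2 := mul_le_mul_of_nonneg_left h1 (inv_nonneg.mpr hδpos.le)
      have h3 : δ⁻¹ * (-δ * Real.log (Φ x)) = -Real.log (Φ x) := by
        field_simp
      linarith
    have hlogneg : Real.log (Φ x) ≤ 0 := Real.log_nonpos hx0.le hx1.le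
    have hnorm : ‖Φ x ^ α * Real.log (Φ x)‖ = Φ x ^ α * (-Real.log (Φ x)) := by
      rw [norm_mul, Real.norm_rpow_of_nonneg hx0.le, Real.norm_eq_abs, Real.norm_eq_abs,
        abs_of_nonpos hlogneg, abs_of_nonneg hx0.le]
    rw [hnorm]
    have hpow : Φ x ^ α * Φ x ^ (-δ) = Φ x ^ (α - δ) := by
      rw [← Real.rpow_add hx0]; ring_nf
    calc Φ x ^ α * (-Real.log (Φ x))
        ≤ Φ x ^ α * (δ⁻¹ * Φ x ^ (-δ)) :=
          mul_le_mul_of_nonneg_left hlogle (Real.rpow_nonneg hx0.le _)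
      _ = δ⁻¹ * Φ x ^ (α - δ) := by rw [← hpow]; ring
      _ ≤ δ⁻¹ * Φ x ^ c := by
          apply mul_le_mul_of_nonneg_left _ (inv_nonneg.mpr hδpos.le)
          exact Real.rpow_le_rpow_of_exponent_ge hx0 hx1.le (by linarith)
  · -- differentiability
    refine (ae_restrict_mem hS).mono fun x hx => ?_
    obtain ⟨hx0, _⟩ : 0 < Φ x ∧ Φ x < 1 := hx
    intro α _
    exact (Real.hasStrictDerivAt_const_rpow hx0 α).hasDerivAt
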